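/- In a maximum projective arrangement of a rooted tree (n ≥ 2), the root occupies one end of the arrangement (position 1 or position n). -/

import Mathlib

open SimpleGraph

attribute [local instance] Classical.propDecidable

/-- Length of an edge (as an unordered pair) in an arrangement. -/
noncomputable def edgeLen {V : Type*} [Fintype V] (π : V ≃ Fin (Fintype.card V)) :
    Sym2 V → ℕ :=
  Sym2.lift ⟨fun u v => ((π u : ℤ) - (π v : ℤ)).natAbs, fun u v => by
    simp only []; omega⟩

/-- Cost of a linear arrangement: sum of edge lengths. -/
noncomputable def cost {V : Type*} [Fintype V] (G : SimpleGraph V)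
    (π : V ≃ Fin (Fintype.card V)) : ℕ :=
  ∑ᶠ e ∈ G.edgeSet, edgeLen π e

/-- An arrangement is planar if no two edges cross. -/
def Planar {V : Type*} [Fintype V] (G : SimpleGraph V)
    (π : V ≃ Fin (Fintype.card V)) : Prop :=
  ∀ ⦃s t u v : V⦄, G.Adj s t → G.Adj u v → π s < π t → π u < π v → π s < π u →
    ¬(π u < π t ∧ π t < π v)

/-- An arrangement of a tree rooted at `r` is projective if it is planar and no
edge covers the root. -/
def Projective {V : Type*} [Fintype V] (G : SimpleGraph V) (r : V)
    (π : V ≃ Fin (Fintype.card V)) : Prop :=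
  Planar G π ∧ ∀ ⦃u v : V⦄, G.Adj u v → ¬(π u < π r ∧ π r < π v)

noncomputable def maxCost {V : Type*} [Fintype V] (G : SimpleGraph V) : ℕ :=
  sSup {c | ∃ π : V ≃ Fin (Fintype.card V), cost G π = c}

noncomputable def maxPlanar {V : Type*} [Fintype V] (G : SimpleGraph V) : ℕ :=
  sSup {c | ∃ π : V ≃ Fin (Fintype.card V), Planar G π ∧ cost G π = c}

noncomputable def maxProj {V : Type*} [Fintype V] (G : SimpleGraph V) (r : V) : ℕ :=
  sSup {c | ∃ π : V ≃ Fin (Fintype.card V), Projective G r π ∧ cost G π = c}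

/-- `compSize G u v` : the number of vertices of the connected component of `v`
after removing the edge `uv` (this is `n_u(v)`). -/
noncomputable def compSize {V : Type*} [Fintype V] (G : SimpleGraph V) (u v : V) : ℕ :=
  Nat.card {y : V // (G.deleteEdges {s(u, v)}).Reachable v y}

/-- The star graph: the vertex with value `0` (the hub) is adjacent to all others. -/
def starGraph (n : ℕ) : SimpleGraph (Fin n) :=
  SimpleGraph.fromRel (fun i _ => (i : ℕ) = 0)

lemma edgeLen_mk {V : Type*} [Fintype V] (π : V ≃ Fin (Fintype.card V)) (u v : V) :
    edgeLen π s(u, v) = ((π u : ℤ) - (π v : ℤ)).natAbs := rfl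

lemma noCross {V : Type*} [Fintype V] {G : SimpleGraph V} {π : V ≃ Fin (Fintype.card V)}
    (hP : Planar G π) {s t u v : V} (hst : G.Adj s t) (huv : G.Adj u v) :
    ¬((π s : ℕ) < (π u : ℕ) ∧ (π u : ℕ) < (π t : ℕ) ∧ (π t : ℕ) < (π v : ℕ)) := by
  rintro ⟨h1, h2, h3⟩
  exact hP hst huv (Fin.lt_def.mpr (h1.trans h2)) (Fin.lt_def.mpr (h2.trans h3))
    (Fin.lt_def.mpr h1) ⟨Fin.lt_def.mpr h2, Fin.lt_def.mpr h3⟩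

set_option maxHeartbeats 1000000

/-- In a maximum projective arrangement of a rooted tree with `n ≥ 2`, the root
occupies one end of the arrangement. -/
theorem root_at_end_of_max_projective (n : ℕ) (hn : 2 ≤ n)
    (G : SimpleGraph (Fin n)) (hG : G.IsTree) (r : Fin n)
    (π : Fin n ≃ Fin (Fintype.card (Fin n)))
    (hπ : Projective G r π)
    (hmax : ∀ σ : Fin n ≃ Fin (Fintype.card (Fin n)),
      Projective G r σ → cost G σ ≤ cost G π) :
    (π r : ℕ) = 0 ∨ (π r : ℕ) = n - 1 := by
  by_contra hcon
  push_neg at hcon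
  obtain ⟨hk0, hkn⟩ := hcon
  have hcard : Fintype.card (Fin n) = n := Fintype.card_fin n
  set k : ℕ := (π r : ℕ) with hkdef
  have hkn' : k < Fintype.card (Fin n) := (π r).isLt
  have hk1 : 0 < k := Nat.pos_of_ne_zero hk0
  have hk2 : k + 1 < Fintype.card (Fin n) := by omega
  -- classification of edges: both endpoints ≤ k or both ≥ k
  have hclass : ∀ ⦃u v : Fin n⦄, G.Adj u v →
      ((π u : ℕ) ≤ k ∧ (π v : ℕ) ≤ k) ∨ (k ≤ (π u : ℕ) ∧ k ≤ (π v : ℕ)) := by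
    intro u v huv
    have h1 := hπ.2 huv
    have h2 := hπ.2 huv.symm
    simp only [not_and, Fin.lt_def, not_lt] at h1 h2
    omega
  -- the reflection of the prefix [0, k]
  have hkn'' : ∀ i : Fin (Fintype.card (Fin n)), k - (i : ℕ) < Fintype.card (Fin n) :=
    fun i => lt_of_le_of_lt (Nat.sub_le _ _) hkn'
  set fn : Fin (Fintype.card (Fin n)) → Fin (Fintype.card (Fin n)) :=
    fun i => if (i : ℕ) ≤ k then ⟨k - (i : ℕ), hkn'' i⟩ else i with hfn
  have hfnval : ∀ i, (fn i : ℕ) = if (i : ℕ) ≤ k then k - (i : ℕ) else (i : ℕ) := by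
    intro i
    simp only [hfn]
    split_ifs <;> rfl
  have hinv : Function.Involutive fn := by
    intro i
    apply Fin.ext
    have h1 := hfnval (fn i)
    have h2 := hfnval i
    split_ifs at h1 h2 <;> omega
  set σ : Fin n ≃ Fin (Fintype.card (Fin n)) := π.trans hinv.toPerm with hσdef
  have hσval : ∀ x : Fin n, (σ x : ℕ) = if (π x : ℕ) ≤ k then k - (π x : ℕ) else (π x : ℕ) := by
    intro x
    simp only [hσdef, Equiv.trans_apply, Function.Involutive.coe_toPerm]
    exact hfnval (π x)
  -- σ is projective
  have hσr : (σ r : ℕ) = 0 := by rw [hσval r]; split_ifs <;> omega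
  have hσplanar : Planar G σ := by
    intro s t u v hst huv h1 h2 h3 h45
    obtain ⟨h4, h5⟩ := h45
    rw [Fin.lt_def] at h1 h2 h3 h4 h5
    have cs := hclass hst
    have cu := hclass huv
    have n1 := noCross hπ.1 hst huv
    have n2 := noCross hπ.1 hst.symm huv
    have n3 := noCross hπ.1 hst huv.symm
    have n4 := noCross hπ.1 hst.symm huv.symm
    have n5 := noCross hπ.1 huv hst
    have n6 := noCross hπ.1 huv.symm hst
    have n7 := noCross hπ.1 huv hst.symm
    have n8 := noCross hπ.1 huv.symm hst.symm
    have e1 := hσval s; have e2 := hσval t; have e3 := hσval u; have e4 := hσval v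
    split_ifs at e1 e2 e3 e4 <;> omega
  have hσproj : Projective G r σ := by
    refine ⟨hσplanar, ?_⟩
    intro u v huv h
    obtain ⟨h1, h2⟩ := h
    rw [Fin.lt_def] at h1
    omega
  -- r has a neighbor on the right of k
  have hreach : ∀ (w z : Fin n) (p : G.Walk w z), z = r → k < (π w : ℕ) →
      ∃ v : Fin n, G.Adj r v ∧ k < (π v : ℕ) := by
    intro w z p
    induction p with
    | nil => rintro rfl h; omega
    | @cons a b c hadj q ih =>
      intro hz hw
      by_cases hb : k < (π b : ℕ)
      · exact ih hz hb
      · have := hclass hadj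
        have hbk : (π b : ℕ) = k := by omega
        have hbr : b = r := by
          apply π.injective
          apply Fin.ext
          omega
        exact ⟨a, (hbr ▸ hadj).symm, hw⟩
  have hw0 : ∃ v : Fin n, G.Adj r v ∧ k < (π v : ℕ) := by
    have hπw : (π (π.symm ⟨k + 1, hk2⟩) : ℕ) = k + 1 := by rw [Equiv.apply_symm_apply]
    obtain ⟨p⟩ := hG.isConnected.preconnected (π.symm ⟨k + 1, hk2⟩) r
    exact hreach _ _ p rfl (by omega)
  obtain ⟨v₀, hadj₀, hv₀⟩ := hw0
  -- cost strictly increases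
  have hcost : cost G π < cost G σ := by
    rw [cost, cost, ← coe_edgeFinset, finsum_mem_coe_finset, finsum_mem_coe_finset]
    apply Finset.sum_lt_sum
    · intro e he
      induction e using Sym2.ind with
      | _ u v =>
        rw [mem_edgeFinset, mem_edgeSet] at he
        have hc := hclass he
        have e1 := hσval u; have e2 := hσval v
        rw [edgeLen_mk, edgeLen_mk]
        split_ifs at e1 e2 <;> omega
    · refine ⟨s(r, v₀), by rwa [mem_edgeFinset, mem_edgeSet], ?_⟩
      rw [edgeLen_mk, edgeLen_mk]
      have e1 := hσval r; have e2 := hσval v₀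
      split_ifs at e1 e2 <;> omega
  exact absurd (hmax σ hσproj) (by omega)
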